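/- Let M be a topological 2-manifold, i.e. a Hausdorff, second-countable topological space equipped with a charted-space structure modeled on the Euclidean plane (EuclideanSpace ℝ (Fin 2)). Then for every n ≥ 1 the n-th symmetric product SP^n(M) is a topological 2n-manifold: SP^n(M) is Hausdorff, second countable, and admits a charted-space structure modeled on EuclideanSpace ℝ (Fin (2*n)), i.e. every point has an open neighborhood homeomorphic to an open subset of ℝ^{2n}. -/

import Mathlib

/-- The setoid on `Fin n → X` whose classes are orbits of the permutation action
of `Equiv.Perm (Fin n)`. -/
def SPSetoid (n : ℕ) (X : Type*) : Setoid (Fin n → X) where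
  r f g := ∃ σ : Equiv.Perm (Fin n), f ∘ σ = g
  iseqv := by
    constructor
    · exact fun f => ⟨Equiv.refl _, rfl⟩
    · rintro f g ⟨σ, rfl⟩
      exact ⟨σ.symm, by funext i; simp⟩
    · rintro f g h ⟨σ, rfl⟩ ⟨τ, rfl⟩
      exact ⟨τ.trans σ, by funext i; simp⟩

/-- The `n`-th symmetric product `SP^n(X) = X^n / S_n`, with the quotient topology. -/
def SP (n : ℕ) (X : Type*) [TopologicalSpace X] : Type _ :=
  Quotient (SPSetoid n X)

instance (n : ℕ) (X : Type*) [TopologicalSpace X] : TopologicalSpace (SP n X) :=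
  inferInstanceAs (TopologicalSpace (Quotient (SPSetoid n X)))

section Basic

variable {n : ℕ} {X Y : Type*} [TopologicalSpace X] [TopologicalSpace Y]

/-- The quotient map onto the symmetric product. -/
def spmk : (Fin n → X) → SP n X := Quotient.mk (SPSetoid n X)

lemma spmk_surjective : Function.Surjective (spmk (n := n) (X := X)) :=
  Quotient.mk_surjective

lemma continuous_spmk : Continuous (spmk (n := n) (X := X)) :=
  continuous_coinduced_rng

lemma spmk_eq_iff {f g : Fin n → X} :
    spmk f = spmk g ↔ ∃ σ : Equiv.Perm (Fin n), f ∘ σ = g :=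
  ⟨Quotient.exact, fun h => Quotient.sound h⟩

/-- Precomposition with a permutation, as a homeomorphism of `X^n`. -/
def permHomeo (σ : Equiv.Perm (Fin n)) : (Fin n → X) ≃ₜ (Fin n → X) where
  toFun f := f ∘ σ
  invFun f := f ∘ σ.symm
  left_inv f := by funext i; simp
  right_inv f := by funext i; simp
  continuous_toFun := continuous_pi fun i => continuous_apply (σ i)
  continuous_invFun := continuous_pi fun i => continuous_apply (σ.symm i)

lemma isOpenMap_spmk : IsOpenMap (spmk (n := n) (X := X)) := by
  intro U hU
  change IsOpen (spmk ⁻¹' (spmk '' U))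
  have : spmk ⁻¹' (spmk '' U) = ⋃ σ : Equiv.Perm (Fin n), (permHomeo σ) '' U := by
    ext g
    simp only [Set.mem_preimage, Set.mem_image, Set.mem_iUnion]
    constructor
    · rintro ⟨u, hu, hug⟩
      obtain ⟨σ, hσ⟩ := spmk_eq_iff.mp hug
      exact ⟨σ, u, hu, hσ⟩
    · rintro ⟨σ, u, hu, hug⟩
      exact ⟨u, hu, spmk_eq_iff.mpr ⟨σ, hug⟩⟩
  rw [show (spmk ⁻¹' (spmk '' U)) = _ from this]
  exact isOpen_iUnion fun σ => (permHomeo σ).isOpenMap U hU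

/-- Functoriality of `SP` on maps. -/
def SPmap (φ : X → Y) : SP n X → SP n Y :=
  Quotient.map (fun f => φ ∘ f) (by
    rintro f g ⟨σ, rfl⟩
    exact ⟨σ, rfl⟩)

lemma SPmap_mk (φ : X → Y) (f : Fin n → X) : SPmap φ (spmk f) = spmk (φ ∘ f) := rfl

lemma continuous_comp_pi {φ : X → Y} (hφ : Continuous φ) :
    Continuous (fun f : Fin n → X => φ ∘ f) :=
  continuous_pi fun i => hφ.comp (continuous_apply i)

lemma continuous_SPmap {φ : X → Y} (hφ : Continuous φ) :
    Continuous (SPmap (n := n) φ) := by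
  refine (continuous_coinduced_dom (f := spmk) (g := SPmap φ)).mpr ?_
  exact continuous_spmk.comp (continuous_comp_pi hφ)

lemma injective_SPmap {φ : X → Y} (hφ : Function.Injective φ) :
    Function.Injective (SPmap (n := n) φ) := by
  intro a b
  induction a using Quotient.ind
  induction b using Quotient.ind
  rename_i f g
  intro h
  obtain ⟨σ, hσ⟩ := spmk_eq_iff.mp h
  refine spmk_eq_iff.mpr ⟨σ, funext fun i => hφ ?_⟩
  exact congrFun hσ i

lemma isOpenMap_comp_pi {φ : X → Y} (hφ : IsOpenMap φ) :
    IsOpenMap (fun f : Fin n → X => φ ∘ f) := by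
  intro U hU
  rw [isOpen_iff_mem_nhds]
  rintro y ⟨g, hg, rfl⟩
  obtain ⟨I, V, hV, hsub⟩ := isOpen_pi_iff.mp hU g hg
  have hN : (Set.univ.pi fun i => if i ∈ I then φ '' (V i) else Set.range φ) ∈ nhds (φ ∘ g) := by
    refine IsOpen.mem_nhds (isOpen_set_pi Set.finite_univ ?_) ?_
    · intro i _
      by_cases hi : i ∈ I
      · simpa [hi] using hφ _ (hV i hi).1
      · simpa [hi] using hφ.isOpen_range
    · intro i _
      by_cases hi : i ∈ I
      · simpa [hi] using ⟨g i, (hV i hi).2, rfl⟩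
      · simpa [hi] using ⟨g i, rfl⟩
  refine Filter.mem_of_superset hN ?_
  intro y hy
  simp only [Set.mem_pi, Set.mem_univ, forall_true_left] at hy
  have : ∀ i, ∃ x, (i ∈ I → x ∈ V i) ∧ φ x = y i := by
    intro i
    by_cases hi : i ∈ I
    · have := hy i; simp only [hi, if_true] at this
      obtain ⟨x, hx, hxy⟩ := this
      exact ⟨x, fun _ => hx, hxy⟩
    · have := hy i; simp only [hi, if_false] at this
      obtain ⟨x, hxy⟩ := this
      exact ⟨x, fun h => absurd h hi, hxy⟩
  choose x hx1 hx2 using this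
  exact ⟨x, hsub fun i hi => hx1 i hi, funext hx2⟩

lemma isOpenMap_SPmap {φ : X → Y} (hc : Continuous φ) (ho : IsOpenMap φ) :
    IsOpenMap (SPmap (n := n) φ) := by
  intro O hO
  have : SPmap φ '' O = spmk '' ((fun f : Fin n → X => φ ∘ f) '' (spmk ⁻¹' O)) := by
    rw [Set.image_image]
    ext y
    constructor
    · rintro ⟨a, ha, rfl⟩
      obtain ⟨f, rfl⟩ := spmk_surjective a
      exact ⟨f, ha, rfl⟩
    · rintro ⟨f, hf, rfl⟩
      exact ⟨spmk f, hf, rfl⟩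
  rw [this]
  exact isOpenMap_spmk _ (isOpenMap_comp_pi ho _ (hO.preimage continuous_spmk))

end Basic

open Polynomial in
noncomputable def vmapP (n : ℕ) (g : Fin n → ℂ) : Polynomial ℂ := ∏ j, (X - C (g j))

section Vieta
open Polynomial

variable {n : ℕ}

lemma vmapP_eq (g : Fin n → ℂ) :
    vmapP n g = ((Multiset.map g Finset.univ.val).map fun t => X - C t).prod := by
  rw [Multiset.map_map]; rfl

lemma card_map_univ (g : Fin n → ℂ) : Multiset.card (Multiset.map g Finset.univ.val) = n := by
  simp

lemma monic_vmapP (g : Fin n → ℂ) : (vmapP n g).Monic :=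
  monic_prod_of_monic _ _ fun j _ => monic_X_sub_C (g j)

lemma natDegree_vmapP (g : Fin n → ℂ) : (vmapP n g).natDegree = n := by
  rw [vmapP_eq, natDegree_multiset_prod_X_sub_C_eq_card, card_map_univ]

lemma roots_vmapP (g : Fin n → ℂ) : (vmapP n g).roots = Multiset.map g Finset.univ.val := by
  rw [vmapP_eq, roots_multiset_prod_X_sub_C]

noncomputable def vmap (n : ℕ) (g : Fin n → ℂ) : Fin n → ℂ := fun i => (vmapP n g).coeff i

lemma vmap_eq_esymm (g : Fin n → ℂ) (i : Fin n) :
    vmap n g i = (-1) ^ (n - (i : ℕ)) *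
      ∑ t ∈ Finset.powersetCard (n - (i : ℕ)) Finset.univ, ∏ j ∈ t, g j := by
  rw [vmap, vmapP_eq, Multiset.prod_X_sub_C_coeff _ (by simp [Fin.is_le'])]
  rw [card_map_univ, Finset.esymm_map_val]

lemma continuous_vmap : Continuous (vmap n) := by
  refine continuous_pi fun i => ?_
  simp only [vmap_eq_esymm]
  exact continuous_const.mul <| continuous_finset_sum _ fun t _ =>
    continuous_finset_prod _ fun j _ => continuous_apply j

lemma vmap_comp_perm (f : Fin n → ℂ) (σ : Equiv.Perm (Fin n)) :
    vmap n (f ∘ σ) = vmap n f := by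
  funext i
  simp only [vmap, vmapP]
  congr 1
  exact Equiv.prod_comp σ fun j => X - C (f j)

/-- From equality of value multisets, get a permutation matching up two tuples. -/
lemma exists_comp_perm_eq {α : Type*} {f g : Fin n → α}
    (h : Multiset.map f Finset.univ.val = Multiset.map g Finset.univ.val) :
    ∃ σ : Equiv.Perm (Fin n), f ∘ σ = g := by
  classical
  have hcard : ∀ a : α, Fintype.card {i // g i = a} = Fintype.card {i // f i = a} := by
    intro a
    have := congrArg (Multiset.count a) h
    rw [Multiset.count_map, Multiset.count_map] at this
    simp only [← Finset.filter_val, Finset.card_val] at this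
    rw [Fintype.card_subtype, Fintype.card_subtype]
    convert this.symm using 2 <;> · ext i; simp [eq_comm]
  have e : ∀ a : α, {i // g i = a} ≃ {i // f i = a} := fun a =>
    Fintype.equivOfCardEq (hcard a)
  refine ⟨(Equiv.sigmaFiberEquiv g).symm.trans
    ((Equiv.sigmaCongrRight e).trans (Equiv.sigmaFiberEquiv f)), funext fun i => ?_⟩
  exact ((e (g i)) ⟨i, rfl⟩).2

lemma injective_vmap : ∀ {f g : Fin n → ℂ}, vmap n f = vmap n g →
    ∃ σ : Equiv.Perm (Fin n), f ∘ σ = g := by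
  intro f g h
  have hP : vmapP n f = vmapP n g := by
    ext k
    rcases lt_trichotomy k n with hk | hk | hk
    · exact congrFun h ⟨k, hk⟩
    · subst hk
      have h1 := (monic_vmapP f).coeff_natDegree
      have h2 := (monic_vmapP g).coeff_natDegree
      rw [natDegree_vmapP] at h1 h2
      rw [h1, h2]
    · rw [coeff_eq_zero_of_natDegree_lt (by rwa [natDegree_vmapP]),
        coeff_eq_zero_of_natDegree_lt (by rwa [natDegree_vmapP])]
  apply exists_comp_perm_eq
  rw [← roots_vmapP f, ← roots_vmapP g, hP]

lemma surjective_vmap : Function.Surjective (vmap n) := by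
  intro a
  rcases Nat.eq_zero_or_pos n with hn | hn
  · subst hn
    exact ⟨a, funext fun i => i.elim0⟩
  set P : Polynomial ℂ := X ^ n + ∑ i : Fin n, C (a i) * X ^ (i : ℕ) with hPdef
  have hdeg : (∑ i : Fin n, C (a i) * X ^ (i : ℕ)).degree < (n : WithBot ℕ) := by
    refine lt_of_le_of_lt (degree_sum_le _ _) ?_
    rw [Finset.sup_lt_iff (by exact_mod_cast WithBot.bot_lt_coe n)]
    intro i _
    exact lt_of_le_of_lt (degree_C_mul_X_pow_le _ _) (by exact_mod_cast i.is_lt)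
  have hmonic : P.Monic := monic_X_pow_add hdeg
  have hdegP : P.degree = n := by
    rw [hPdef, degree_add_eq_left_of_degree_lt (by rwa [degree_X_pow]), degree_X_pow]
  have hnatdegP : P.natDegree = n := natDegree_eq_of_degree_eq_some hdegP
  have hsplits : P.Splits := IsAlgClosed.splits P
  have hroots : Multiset.card P.roots = n := by
    rw [splits_iff_card_roots.mp hsplits, hnatdegP]
  set L := P.roots.toList with hL
  have hlen : L.length = n := by rw [hL, Multiset.length_toList, hroots]
  set g : Fin n → ℂ := fun i => L.get (Fin.cast hlen.symm i) with hg
  have hmulti : Multiset.map g Finset.univ.val = P.roots := by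
    have : Multiset.map g Finset.univ.val = ↑(List.ofFn g) := by
      rw [List.ofFn_eq_map]
      simp [Fin.univ_def]
    rw [this, hg]
    have : List.ofFn (fun i => L.get (Fin.cast hlen.symm i)) = L := by
      apply List.ext_getElem (by simp [hlen])
      intro k h1 h2
      simp [List.getElem_ofFn]
    rw [this, hL, Multiset.coe_toList]
  have hprod : vmapP n g = P := by
    rw [vmapP_eq, hmulti]
    exact (hsplits.eq_prod_roots_of_monic hmonic).symm
  refine ⟨g, funext fun i => ?_⟩
  rw [vmap, hprod, hPdef, coeff_add, coeff_X_pow, if_neg (by exact_mod_cast i.is_lt.ne),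
    finset_sum_coeff]
  simp only [coeff_C_mul, coeff_X_pow]
  rw [Finset.sum_eq_single i (fun b _ hb => by
      rw [if_neg (by simpa [Fin.val_eq_val] using (Ne.symm hb)), mul_zero])
    (fun h => absurd (Finset.mem_univ i) h)]
  simp

end Vieta

section VietaSP
open NNReal
open Polynomial

variable {n : ℕ}

/-- The Vieta map on the symmetric product of `ℂ`. -/
noncomputable def vsp (n : ℕ) : SP n ℂ → (Fin n → ℂ) :=
  Quotient.lift (vmap n) (by rintro f g ⟨σ, rfl⟩; exact (vmap_comp_perm f σ).symm)

lemma vsp_mk (f : Fin n → ℂ) : vsp n (spmk f) = vmap n f := rfl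

lemma continuous_vsp : Continuous (vsp n) := by
  refine (continuous_coinduced_dom (f := spmk) (g := vsp n)).mpr ?_
  exact continuous_vmap

lemma injective_vsp : Function.Injective (vsp n) := by
  intro x y
  induction x using Quotient.ind
  induction y using Quotient.ind
  rename_i f g
  intro h
  exact Quotient.sound (injective_vmap h)

lemma surjective_vsp : Function.Surjective (vsp n) := fun a => by
  obtain ⟨g, hg⟩ := surjective_vmap a
  exact ⟨spmk g, hg⟩

lemma isProperMap_vmap : IsProperMap (vmap n) := by
  rw [isProperMap_iff_isCompact_preimage]
  refine ⟨continuous_vmap, fun K hK => ?_⟩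
  obtain ⟨C, hC⟩ := hK.isBounded.exists_norm_le
  refine (isCompact_closedBall (0 : Fin n → ℂ) (C.toNNReal + 1)).of_isClosed_subset
    (hK.isClosed.preimage continuous_vmap) ?_
  intro g hg
  rw [Metric.mem_closedBall, dist_zero_right]
  have hCnn : ‖vmap n g‖₊ ≤ C.toNNReal := by
    have h1 : ‖vmap n g‖ ≤ C := hC _ hg
    have h2 : ‖vmap n g‖ ≤ C.toNNReal := h1.trans (Real.le_coe_toNNReal C)
    exact_mod_cast h2
  have hroot : ∀ j, ‖g j‖₊ < (vmapP n g).cauchyBound := by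
    intro j
    refine Polynomial.IsRoot.norm_lt_cauchyBound (monic_vmapP g).ne_zero ?_
    rw [Polynomial.IsRoot, vmapP, eval_prod]
    exact Finset.prod_eq_zero (Finset.mem_univ j) (by simp)
  have hcb : (vmapP n g).cauchyBound ≤ C.toNNReal + 1 := by
    rw [Polynomial.cauchyBound, (monic_vmapP g).leadingCoeff]
    simp only [nnnorm_one, div_one]
    refine add_le_add_left ?_ 1
    refine Finset.sup_le fun i hi => ?_
    rw [Finset.mem_range, natDegree_vmapP] at hi
    have : (vmapP n g).coeff i = vmap n g ⟨i, hi⟩ := rfl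
    rw [this]
    exact le_trans (nnnorm_le_pi_nnnorm _ _) hCnn
  rw [pi_norm_le_iff_of_nonneg (by positivity)]
  intro j
  calc ‖g j‖ ≤ ((vmapP n g).cauchyBound : ℝ) := by exact_mod_cast (hroot j).le
    _ ≤ (C.toNNReal : ℝ) + 1 := by exact_mod_cast hcb

lemma isClosedMap_vsp : IsClosedMap (vsp n) := by
  intro C hC
  have : vsp n '' C = vmap n '' (spmk ⁻¹' C) := by
    ext a
    constructor
    · rintro ⟨x, hx, rfl⟩
      obtain ⟨f, rfl⟩ := spmk_surjective x
      exact ⟨f, hx, rfl⟩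
    · rintro ⟨f, hf, rfl⟩
      exact ⟨spmk f, hf, rfl⟩
  rw [this]
  exact isProperMap_vmap.isClosedMap _ (hC.preimage continuous_spmk)

lemma isOpenMap_vsp : IsOpenMap (vsp n) := by
  intro O hO
  have h1 : vsp n '' Oᶜ = (vsp n '' O)ᶜ :=
    Set.image_compl_eq ⟨injective_vsp, surjective_vsp⟩
  have h2 : IsClosed (vsp n '' Oᶜ) := isClosedMap_vsp _ (isClosed_compl_iff.mpr hO)
  rw [h1] at h2
  simpa using h2.isOpen_compl

end VietaSP

section Separation

variable {n : ℕ} {X : Type*} [TopologicalSpace X]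

lemma isQuotientMap_spmk : Topology.IsQuotientMap (spmk (n := n) (X := X)) :=
  ⟨⟨rfl⟩, spmk_surjective⟩

lemma secondCountable_SP [SecondCountableTopology X] :
    SecondCountableTopology (SP n X) :=
  isQuotientMap_spmk.secondCountableTopology isOpenMap_spmk

lemma t2_SP [T2Space X] : T2Space (SP n X) := by
  refine ⟨fun a b hab => ?_⟩
  obtain ⟨f, rfl⟩ := spmk_surjective a
  obtain ⟨g, rfl⟩ := spmk_surjective b
  have hfg : ∀ σ : Equiv.Perm (Fin n), f ≠ g ∘ σ := by
    intro σ h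
    exact hab (by rw [h]; exact (spmk_eq_iff.mpr ⟨σ.symm, by funext i; simp⟩))
  have sep : ∀ σ : Equiv.Perm (Fin n), ∃ U V : Set (Fin n → X),
      IsOpen U ∧ IsOpen V ∧ f ∈ U ∧ g ∘ σ ∈ V ∧ Disjoint U V := fun σ =>
    t2_separation (hfg σ)
  choose U V hUo hVo hfU hgV hdisj using sep
  refine ⟨spmk '' (⋂ σ, U σ), spmk '' (⋂ σ, {h | h ∘ σ ∈ V σ}), ?_, ?_, ?_, ?_, ?_⟩
  · exact isOpenMap_spmk _ (isOpen_iInter_of_finite fun σ => hUo σ)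
  · exact isOpenMap_spmk _ (isOpen_iInter_of_finite fun σ =>
      (hVo σ).preimage (permHomeo σ).continuous)
  · exact ⟨f, Set.mem_iInter.mpr hfU, rfl⟩
  · exact ⟨g, Set.mem_iInter.mpr fun σ => hgV σ, rfl⟩
  · rw [Set.disjoint_left]
    rintro x ⟨u, hu, rfl⟩ ⟨v, hv, hvu⟩
    obtain ⟨σ, hσ⟩ := spmk_eq_iff.mp hvu
    -- v ∘ σ = u
    have h1 : u ∈ U σ := Set.mem_iInter.mp hu σ
    have h2 : v ∈ {h : Fin n → X | h ∘ σ ∈ V σ} := Set.mem_iInter.mp hv σ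
    have h3 : u ∈ V σ := by rw [← hσ]; exact h2
    exact Set.disjoint_left.mp (hdisj σ) h1 h3

end Separation

noncomputable def homeoE2C : EuclideanSpace ℝ (Fin 2) ≃ₜ ℂ :=
  ((LinearEquiv.ofFinrankEq (R := ℝ) (EuclideanSpace ℝ (Fin 2)) ℂ
    (by simp [finrank_euclideanSpace, Complex.finrank_real_complex])).toContinuousLinearEquiv).toHomeomorph

noncomputable def homeoCnE (n : ℕ) : (Fin n → ℂ) ≃ₜ EuclideanSpace ℝ (Fin (2 * n)) :=
  haveI : Module.Free ℝ (EuclideanSpace ℝ (Fin (2 * n))) := inferInstance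
  ((LinearEquiv.ofFinrankEq (R := ℝ) (Fin n → ℂ) (EuclideanSpace ℝ (Fin (2 * n)))
    (by simp [finrank_euclideanSpace, Complex.finrank_real_complex,
      Module.finrank_pi_fintype]; ring)).toContinuousLinearEquiv).toHomeomorph

section Charts

open Topology

lemma nat_gap {a b : ℕ} (h : a ≠ b) : (1 : ℝ) ≤ |(a : ℝ) - b| := by
  have key : ∀ {p q : ℕ}, p < q → (1 : ℝ) ≤ |(q : ℝ) - p| := by
    intro p q hpq
    rw [abs_of_nonneg (sub_nonneg.mpr (by exact_mod_cast hpq.le))]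
    have : (p : ℝ) + 1 ≤ q := by exact_mod_cast hpq
    linarith
  rcases h.lt_or_gt with hab | hab
  · rw [abs_sub_comm]; exact key hab
  · exact key hab

/-- The affine rescaling `w ↦ (w - z) / 3 + c` as a homeomorphism of `ℂ`. -/
noncomputable def hAff (z c : ℂ) : ℂ ≃ₜ ℂ :=
  (Homeomorph.subRight z).trans
    (((Homeomorph.mulRight₀ (3⁻¹ : ℂ) (by norm_num)).trans (Homeomorph.addRight c)))

lemma hAff_apply (z c w : ℂ) : hAff z c w = (w - z) * 3⁻¹ + c := rfl

variable {M : Type*} [TopologicalSpace M] [T2Space M]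
  [ChartedSpace (EuclideanSpace ℝ (Fin 2)) M] {n : ℕ}

lemma exists_chart (hn : 1 ≤ n) (x : SP n M) :
    ∃ c : OpenPartialHomeomorph (SP n M) (EuclideanSpace ℝ (Fin (2 * n))),
      x ∈ c.source := by
  classical
  obtain ⟨f, rfl⟩ := spmk_surjective x
  set s : Set M := Set.range f with hs_def
  have hs : s.Finite := Set.finite_range f
  obtain ⟨U, hU, hdisj⟩ := hs.t2_separation
  set t := hs.toFinset with ht_def
  -- pairwise distant centers in ℂ
  set c : M → ℂ := fun y => if h : y ∈ t then ((t.equivFin ⟨y, h⟩ : ℕ) : ℂ) else 0 with hc_def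
  have hc : ∀ y ∈ s, ∀ y' ∈ s, y ≠ y' → (1 : ℝ) ≤ ‖c y - c y'‖ := by
    intro y hy y' hy' hne
    have hyt : y ∈ t := hs.mem_toFinset.mpr hy
    have hy't : y' ∈ t := hs.mem_toFinset.mpr hy'
    have hkk' : (t.equivFin ⟨y, hyt⟩ : ℕ) ≠ (t.equivFin ⟨y', hy't⟩ : ℕ) := by
      intro h
      exact hne (congrArg Subtype.val
        (t.equivFin.injective (Fin.val_injective h)))
    rw [hc_def]
    simp only [hyt, hy't, dif_pos]
    rw [show ((((t.equivFin ⟨y, hyt⟩ : ℕ)) : ℂ) - ((t.equivFin ⟨y', hy't⟩ : ℕ) : ℂ))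
        = ((((t.equivFin ⟨y, hyt⟩ : ℕ) : ℝ) - ((t.equivFin ⟨y', hy't⟩ : ℕ) : ℝ) : ℝ) : ℂ) by
      push_cast; ring]
    rw [Complex.norm_real]
    exact nat_gap hkk'
  set z : M → ℂ := fun y => homeoE2C (chartAt (EuclideanSpace ℝ (Fin 2)) y y) with hz_def
  set ψ : M → M → ℂ := fun y x => hAff (z y) (c y) (homeoE2C (chartAt (EuclideanSpace ℝ (Fin 2)) y x)) with hψ_def
  set D : M → Set M := fun y => U y ∩ ((chartAt (EuclideanSpace ℝ (Fin 2)) y).source ∩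
      (chartAt (EuclideanSpace ℝ (Fin 2)) y) ⁻¹' (homeoE2C ⁻¹' Metric.ball (z y) 1)) with hD_def
  have hDopen : ∀ y, IsOpen (D y) := fun y =>
    (hU y).2.inter ((chartAt (EuclideanSpace ℝ (Fin 2)) y).isOpen_inter_preimage
      (Metric.isOpen_ball.preimage homeoE2C.continuous))
  have hyD : ∀ y, y ∈ D y := fun y =>
    ⟨(hU y).1, mem_chart_source (EuclideanSpace ℝ (Fin 2)) y, by simp [Metric.mem_ball, hz_def]⟩
  have hDsource : ∀ y, D y ⊆ (chartAt (EuclideanSpace ℝ (Fin 2)) y).source := fun y => fun x hx => hx.2.1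
  have hDU : ∀ y, D y ⊆ U y := fun y => fun x hx => hx.1
  have hDdisj : ∀ y ∈ s, ∀ y' ∈ s, y ≠ y' → Disjoint (D y) (D y') := by
    intro y hy y' hy' hne
    exact Set.disjoint_of_subset (hDU y) (hDU y') (hdisj hy hy' hne)
  have hψball : ∀ y, ∀ x ∈ D y, ‖ψ y x - c y‖ < 1/3 := by
    intro y x hx
    have hballmem : homeoE2C (chartAt (EuclideanSpace ℝ (Fin 2)) y x) ∈ Metric.ball (z y) 1 := hx.2.2
    rw [Metric.mem_ball, dist_eq_norm] at hballmem
    rw [hψ_def]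
    simp only [hAff_apply, add_sub_cancel_right]
    rw [norm_mul, norm_inv]
    have h3 : ‖(3:ℂ)‖ = 3 := by simp [Complex.norm_ofNat]
    rw [h3]
    nlinarith [norm_nonneg (homeoE2C (chartAt (EuclideanSpace ℝ (Fin 2)) y x) - z y)]
  have hψinj : ∀ y, Set.InjOn (ψ y) (D y) := by
    intro y x hx x' hx' heq
    rw [hψ_def] at heq
    have h1 := (hAff (z y) (c y)).injective heq
    have h2 := homeoE2C.injective h1
    exact (chartAt (EuclideanSpace ℝ (Fin 2)) y).injOn (hDsource y hx) (hDsource y hx') h2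
  -- the disjoint-union chart domain
  set A := (y : ↥s) × ↥(D y.1) with hA_def
  set j : A → M := fun w => w.2.1 with hj_def
  set k : A → ℂ := fun w => ψ w.1.1 w.2.1 with hk_def
  have hjcont : Continuous j := continuous_sigma fun y => continuous_subtype_val
  have hjinj : Function.Injective j := by
    rintro ⟨y, x⟩ ⟨y', x'⟩ h
    simp only [hj_def] at h
    have hyy' : y = y' := by
      by_contra hne
      have hne' : (y:M) ≠ (y':M) := fun hv => hne (Subtype.ext hv)
      exact Set.disjoint_left.mp (hDdisj y y.2 y' y'.2 hne') x.2 (h ▸ x'.2)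
    subst hyy'
    exact congrArg (Sigma.mk y) (Subtype.ext h)
  have hjopen : IsOpenMap j := by
    intro O hO
    have : j '' O = ⋃ y, Subtype.val '' (Set.preimage (Sigma.mk (β := fun y : ↥s => ↥(D y.1)) y) O) := by
      ext m
      simp only [Set.mem_image, Set.mem_iUnion, Set.mem_preimage]
      constructor
      · rintro ⟨⟨y, x⟩, hw, rfl⟩; exact ⟨y, x, hw, rfl⟩
      · rintro ⟨y, x, hw, rfl⟩; exact ⟨⟨y, x⟩, hw, rfl⟩
    rw [this]
    exact isOpen_iUnion fun y => (hDopen y).isOpenMap_subtype_val _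
      (isOpen_sigma_iff.mp hO y)
  have hkcont : Continuous k := by
    refine continuous_sigma fun y => ?_
    have : ContinuousOn (ψ y.1) (D y.1) := by
      rw [hψ_def]
      exact (hAff (z y.1) (c y.1)).continuous.comp_continuousOn
        (homeoE2C.continuous.comp_continuousOn
          ((chartAt (EuclideanSpace ℝ (Fin 2)) y.1).continuousOn.mono (hDsource y.1)))
    exact this.restrict
  have hkball : ∀ w : A, ‖k w - c w.1.1‖ < 1/3 := fun w => hψball w.1.1 w.2.1 w.2.2
  have hkinj : Function.Injective k := by
    rintro ⟨y, x⟩ ⟨y', x'⟩ h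
    have hyy' : y = y' := by
      by_contra hne
      have hne' : (y:M) ≠ (y':M) := fun hv => hne (Subtype.ext hv)
      have h1 := hc y.1 y.2 y'.1 y'.2 hne'
      have h2 := hkball ⟨y, x⟩
      have h3 := hkball ⟨y', x'⟩
      simp only [hk_def] at h h2 h3
      have h0 : ψ y.1 x.1 - ψ y'.1 x'.1 = 0 := sub_eq_zero_of_eq h
      have hd : c y.1 - c y'.1
          = (ψ y'.1 x'.1 - c y'.1) - (ψ y.1 x.1 - c y.1) + (ψ y.1 x.1 - ψ y'.1 x'.1) := by
        ring
      have hle : ‖c y.1 - c y'.1‖ ≤ ‖ψ y'.1 x'.1 - c y'.1‖ + ‖ψ y.1 x.1 - c y.1‖ := by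
        rw [hd, h0, add_zero]
        exact norm_sub_le _ _
      linarith
    subst hyy'
    simp only [hk_def] at h
    exact congrArg (Sigma.mk y) (Subtype.ext (hψinj y.1 x.2 x'.2 h))
  have hkopen : IsOpenMap k := by
    intro O hO
    have : k '' O = ⋃ y, ψ y.1 '' (Subtype.val '' (Set.preimage (Sigma.mk (β := fun y : ↥s => ↥(D y.1)) y) O)) := by
      ext m
      simp only [Set.mem_image, Set.mem_iUnion, Set.mem_preimage]
      constructor
      · rintro ⟨⟨y, x⟩, hw, rfl⟩; exact ⟨y, x.1, ⟨x, hw, rfl⟩, rfl⟩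
      · rintro ⟨y, m', ⟨x, hw, rfl⟩, rfl⟩; exact ⟨⟨y, x⟩, hw, rfl⟩
    rw [this]
    refine isOpen_iUnion fun y => ?_
    have hV : IsOpen (Subtype.val '' (Set.preimage (Sigma.mk (β := fun y : ↥s => ↥(D y.1)) y) O)) :=
      (hDopen y.1).isOpenMap_subtype_val _ (isOpen_sigma_iff.mp hO y)
    have hVsub : Subtype.val '' (Set.preimage (Sigma.mk (β := fun y : ↥s => ↥(D y.1)) y) O) ⊆ D y.1 := by
      rintro m ⟨x, _, rfl⟩; exact x.2
    have himg : ψ y.1 '' (Subtype.val '' (Set.preimage (Sigma.mk (β := fun y : ↥s => ↥(D y.1)) y) O))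
        = (hAff (z y.1) (c y.1)) '' (homeoE2C '' ((chartAt (EuclideanSpace ℝ (Fin 2)) y.1) ''
          (Subtype.val '' (Set.preimage (Sigma.mk (β := fun y : ↥s => ↥(D y.1)) y) O)))) := by
      conv_rhs => rw [Set.image_image, Set.image_image]
    rw [himg]
    exact (hAff (z y.1) (c y.1)).isOpenMap _ (homeoE2C.isOpenMap _
      ((chartAt (EuclideanSpace ℝ (Fin 2)) y.1).isOpen_image_of_subset_source hV (hVsub.trans (hDsource y.1))))
  -- induced maps on symmetric products
  have hsj : IsOpenEmbedding (SPmap (n := n) j) :=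
    .of_continuous_injective_isOpenMap (continuous_SPmap hjcont)
      (injective_SPmap hjinj) (isOpenMap_SPmap hjcont hjopen)
  set sk : SP n A → EuclideanSpace ℝ (Fin (2 * n)) :=
    (homeoCnE n) ∘ (vsp n) ∘ (SPmap k) with hsk_def
  have hsk : IsOpenEmbedding sk := by
    rw [hsk_def]
    refine .of_continuous_injective_isOpenMap ?_ ?_ ?_
    · exact (homeoCnE n).continuous.comp (continuous_vsp.comp (continuous_SPmap hkcont))
    · exact (homeoCnE n).injective.comp (injective_vsp.comp (injective_SPmap hkinj))
    · exact ((homeoCnE n).isOpenMap.comp isOpenMap_vsp).comp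
        (isOpenMap_SPmap hkcont hkopen)
  set F : Fin n → A := fun i => ⟨⟨f i, Set.mem_range_self i⟩, ⟨f i, hyD (f i)⟩⟩ with hF_def
  haveI : Nonempty (SP n A) := ⟨spmk F⟩
  refine ⟨(hsj.toOpenPartialHomeomorph (SPmap j)).symm.trans (hsk.toOpenPartialHomeomorph sk), ?_⟩
  rw [OpenPartialHomeomorph.trans_source]
  constructor
  · rw [OpenPartialHomeomorph.symm_source, IsOpenEmbedding.toOpenPartialHomeomorph_target]
    exact ⟨spmk F, by rw [SPmap_mk]; rfl⟩
  · simp [IsOpenEmbedding.toOpenPartialHomeomorph_source]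

end Charts

/-- If `M` is a topological 2-manifold (Hausdorff, second countable, charted on the
Euclidean plane), then for every `n ≥ 1` the symmetric product `SP^n(M)` is a
topological `2n`-manifold: Hausdorff, second countable, and admitting a charted
space structure modeled on `EuclideanSpace ℝ (Fin (2*n))`. -/
theorem SP_of_surface_is_manifold
    (M : Type*) [TopologicalSpace M] [T2Space M] [SecondCountableTopology M]
    [ChartedSpace (EuclideanSpace ℝ (Fin 2)) M] (n : ℕ) (hn : 1 ≤ n) :
    T2Space (SP n M) ∧ SecondCountableTopology (SP n M) ∧
      Nonempty (ChartedSpace (EuclideanSpace ℝ (Fin (2 * n))) (SP n M)) := by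
  refine ⟨t2_SP, secondCountable_SP, ?_⟩
  choose c hc using fun x => exists_chart (M := M) hn x
  exact ⟨{ atlas := Set.range c, chartAt := c, mem_chart_source := hc,
           chart_mem_atlas := fun x => Set.mem_range_self x }⟩
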